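/- Let m, n be coprime positive integers, γ an (m,n)-Dyck path and γ* the associated rugged (m+n,n)-Dyck path. Then h(γ) = h(γ*) - Σ_{p ∈ V(γ*)} k(p), where h(δ) = |H(δ)| counts pairs of a horizontal step and a later vertical step both met by a common line parallel to the diagonal, V(γ*) is the set of outer vertices of γ* other than the one farthest from the diagonal, and k(p) is the number of horizontal steps of γ* (other than the two touching p) intersected by the line of slope n/(m+n) through p. -/

import Mathlib

open scoped Classical
open Finset

/-- A lattice path is encoded as a list of steps: `false` = horizontal step `(1,0)`,
`true` = vertical step `(0,1)`.  `IsDyck m n w` says `w` is an `(m,n)`-Dyck path: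
it has `m` horizontal and `n` vertical steps and every intermediate lattice point
`(x,y)` satisfies `n*x ≤ m*y` (the path stays weakly above the diagonal `y=(n/m)x`). -/
def IsDyck (m n : ℕ) (w : List Bool) : Prop :=
  w.count false = m ∧ w.count true = n ∧
    ∀ p ∈ w.inits, n * p.count false ≤ m * p.count true

/-- `x`-coordinate of the point of the path reached after the first `i` steps. -/
def ptX (w : List Bool) (i : ℕ) : ℤ := ((w.take i).count false : ℤ)

/-- `y`-coordinate of the point of the path reached after the first `i` steps. -/
def ptY (w : List Bool) (i : ℕ) : ℤ := ((w.take i).count true : ℤ)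

/-- `O(γ)`: pairs `(i,j)` of a horizontal step `i` and a vertical step `j`
appearing later in the path. -/
def Opairs (w : List Bool) : Finset (ℕ × ℕ) :=
  (Finset.range w.length ×ˢ Finset.range w.length).filter
    (fun ij => ij.1 < ij.2 ∧ w[ij.1]? = some false ∧ w[ij.2]? = some true)

/-- The set of (bottom-left corners of) complete unit lattice squares lying between the
path and the diagonal `y = (n/m)x`: the square `[x,x+1]×[y,y+1]` lies weakly above the
diagonal and strictly below the path. -/
noncomputable def areaSet (m n : ℕ) (w : List Bool) : Finset (ℕ × ℕ) :=
  ((Finset.range m) ×ˢ (Finset.range n)).filter (fun xy =>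
    n * (xy.1 + 1) ≤ m * xy.2 ∧
    ∃ i < w.length, w[i]? = some false ∧
      (w.take (i+1)).count false = xy.1 + 1 ∧ xy.2 + 1 ≤ (w.take (i+1)).count true)

/-- `area(γ)`: the number of complete unit lattice squares between the path and the
diagonal. -/
noncomputable def area (m n : ℕ) (w : List Bool) : ℕ := (areaSet m n w).card

/-- Some line of slope `n/m` (i.e. `{(x,y) | n*x - m*y = c}`) meets both the closed
horizontal step segment `i` and the closed vertical step segment `j`. -/
def MeetsBoth (m n : ℕ) (w : List Bool) (i j : ℕ) : Prop :=
  ∃ c : ℝ,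
    (∃ x : ℝ, (ptX w i : ℝ) ≤ x ∧ x ≤ (ptX w i : ℝ) + 1 ∧
      (n : ℝ) * x - (m : ℝ) * (ptY w i : ℝ) = c) ∧
    (∃ y : ℝ, (ptY w j : ℝ) ≤ y ∧ y ≤ (ptY w j : ℝ) + 1 ∧
      (n : ℝ) * (ptX w j : ℝ) - (m : ℝ) * y = c)

/-- Condition (1A): the line of slope `n/m` through the left endpoint `(a-1,b)` of the
horizontal step `i` meets the closed vertical step segment `j`. -/
def Cond1A (m n : ℕ) (w : List Bool) (i j : ℕ) : Prop :=
  ∃ y : ℝ, (ptY w j : ℝ) ≤ y ∧ y ≤ (ptY w j : ℝ) + 1 ∧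
    (n : ℝ) * ((ptX w j : ℝ) - (ptX w i : ℝ)) = (m : ℝ) * (y - (ptY w i : ℝ))

/-- Condition (2A): the line of slope `n/m` through the top endpoint `(a',b'+1)` of the
vertical step `j` meets the closed horizontal step segment `i`. -/
def Cond2A (m n : ℕ) (w : List Bool) (i j : ℕ) : Prop :=
  ∃ x : ℝ, (ptX w i : ℝ) ≤ x ∧ x ≤ (ptX w i : ℝ) + 1 ∧
    (n : ℝ) * (x - (ptX w j : ℝ)) = (m : ℝ) * ((ptY w i : ℝ) - ((ptY w j : ℝ) + 1))

/-- `H(γ)`: pairs in `O(γ)` admitting a common transversal line parallel to the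
diagonal. -/
noncomputable def Hpairs (m n : ℕ) (w : List Bool) : Finset (ℕ × ℕ) :=
  (Opairs w).filter (fun ij => MeetsBoth m n w ij.1 ij.2)

/-- `H₁(γ)`: pairs in `O(γ)` satisfying condition (1A). -/
noncomputable def H1pairs (m n : ℕ) (w : List Bool) : Finset (ℕ × ℕ) :=
  (Opairs w).filter (fun ij => Cond1A m n w ij.1 ij.2)

/-- `H₂(γ)`: pairs in `O(γ)` satisfying condition (2A). -/
noncomputable def H2pairs (m n : ℕ) (w : List Bool) : Finset (ℕ × ℕ) :=
  (Opairs w).filter (fun ij => Cond2A m n w ij.1 ij.2)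

/-- The line of slope `n/m` through the point `(px,py)` meets the closed segment of the
horizontal step `i`. -/
def lineHitsH (m n : ℕ) (w : List Bool) (px py : ℤ) (i : ℕ) : Prop :=
  w[i]? = some false ∧
    ∃ x : ℝ, (ptX w i : ℝ) ≤ x ∧ x ≤ (ptX w i : ℝ) + 1 ∧
      (n : ℝ) * (x - (px : ℝ)) = (m : ℝ) * ((ptY w i : ℝ) - (py : ℝ))

/-- The line of slope `n/m` through the point `(px,py)` meets the closed segment of the
vertical step `j`. -/
def lineHitsV (m n : ℕ) (w : List Bool) (px py : ℤ) (j : ℕ) : Prop :=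
  w[j]? = some true ∧
    ∃ y : ℝ, (ptY w j : ℝ) ≤ y ∧ y ≤ (ptY w j : ℝ) + 1 ∧
      (n : ℝ) * ((ptX w j : ℝ) - (px : ℝ)) = (m : ℝ) * (y - (py : ℝ))

/-- Outer vertices of the path, encoded by the index `j` of a vertical step that is
immediately followed by a horizontal step; the vertex itself is the point
`(ptX w (j+1), ptY w (j+1))`. -/
def outerIdx (w : List Bool) : Finset ℕ :=
  (Finset.range w.length).filter
    (fun j => w[j]? = some true ∧ w[j+1]? = some false)

/-- The perpendicular distance from the diagonal of the outer vertex indexed by `j`,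
measured by `m*y - n*x` (proportional to the true distance). -/
def diagDist (m n : ℕ) (w : List Bool) (j : ℕ) : ℤ :=
  (m : ℤ) * ptY w (j+1) - (n : ℤ) * ptX w (j+1)

/-- `V(γ)`: outer vertices other than one farthest from the diagonal. -/
def Vset (m n : ℕ) (w : List Bool) : Finset ℕ :=
  (outerIdx w).filter (fun j => ∃ j' ∈ outerIdx w, diagDist m n w j < diagDist m n w j')

/-- `k(p)`: the number of horizontal steps of the path, other than the horizontal step
starting at the outer vertex `p` (indexed by `j`), met by the line of slope `n/m`
through `p`. -/
noncomputable def kH (m n : ℕ) (w : List Bool) (j : ℕ) : ℕ :=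
  ((Finset.range w.length).filter
    (fun i => i ≠ j + 1 ∧ lineHitsH m n w (ptX w (j+1)) (ptY w (j+1)) i)).card

/-- The number of vertical steps of the path, other than the vertical step ending at the
outer vertex `p` (indexed by `j`), met by the line of slope `n/m` through `p`. -/
noncomputable def kV (m n : ℕ) (w : List Bool) (j : ℕ) : ℕ :=
  ((Finset.range w.length).filter
    (fun i => i ≠ j ∧ lineHitsV m n w (ptX w (j+1)) (ptY w (j+1)) i)).card

/-- `k₁(p)`: the number of vertical steps occurring after the outer vertex `p`
(indexed by `j`) met by the line of slope `n/m` through `p`. -/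
noncomputable def k1 (m n : ℕ) (w : List Bool) (j : ℕ) : ℕ :=
  ((Finset.range w.length).filter
    (fun i => j < i ∧ lineHitsV m n w (ptX w (j+1)) (ptY w (j+1)) i)).card

/-- `k₂(p)`: the number of horizontal steps occurring before the outer vertex `p`
(indexed by `j`) met by the line of slope `n/m` through `p`. -/
noncomputable def k2 (m n : ℕ) (w : List Bool) (j : ℕ) : ℕ :=
  ((Finset.range w.length).filter
    (fun i => i ≤ j ∧ lineHitsH m n w (ptX w (j+1)) (ptY w (j+1)) i)).card

/-- The insertion map `γ ↦ γ*`: insert one horizontal step immediately after each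
vertical step. -/
def star : List Bool → List Bool
  | [] => []
  | true :: w => true :: false :: star w
  | false :: w => false :: star w

/-- The index in `γ*` of the step corresponding to the step of index `i` in `γ`. -/
def starIdx (w : List Bool) (i : ℕ) : ℕ := i + (w.take i).count true

/-- A Dyck path is rugged if every vertical step is immediately followed by a
horizontal step. -/
def Rugged (w : List Bool) : Prop :=
  ∀ i, w[i]? = some true → w[i+1]? = some false

section ChunkA

lemma star_cons_true (w : List Bool) : star (true :: w) = true :: false :: star w := rfl
lemma star_cons_false (w : List Bool) : star (false :: w) = false :: star w := rfl

lemma star_append (u v : List Bool) : star (u ++ v) = star u ++ star v := by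
  induction u with
  | nil => rfl
  | cons b u ih => cases b <;> simp [star_cons_true, star_cons_false, ih]

lemma count_true_star (w : List Bool) : (star w).count true = w.count true := by
  induction w with
  | nil => rfl
  | cons b w ih => cases b <;> simp [star_cons_true, star_cons_false, List.count_cons, ih]

lemma count_ft (l : List Bool) : l.count false + l.count true = l.length := by
  induction l with
  | nil => rfl
  | cons b l ih =>
    cases b
    · simpa [List.count_cons] using by omega
    · simp only [List.count_cons]; simp; omega

lemma length_star (w : List Bool) : (star w).length = w.length + w.count true := by
  induction w with
  | nil => rfl
  | cons b w ih =>
    cases b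
    · simp [star_cons_false, List.count_cons, ih]; omega
    · simp [star_cons_true, List.count_cons, ih]; omega

lemma count_false_star (w : List Bool) :
    (star w).count false = w.count false + w.count true := by
  have h1 := count_ft (star w)
  have h2 := count_ft w
  have h3 := count_true_star w
  have h4 := length_star w
  omega

lemma count_take_succ (w : List Bool) (i : ℕ) (b : Bool) :
    (w.take (i+1)).count b = (w.take i).count b + (if w[i]? = some b then 1 else 0) := by
  rw [List.take_succ, List.count_append]
  rcases h : w[i]? with _ | c
  · simp
  · cases b <;> cases c <;> simp

lemma starIdx_zero (w : List Bool) : starIdx w 0 = 0 := rfl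

lemma starIdx_succ (w : List Bool) (i : ℕ) :
    starIdx w (i+1) = starIdx w i + 1 + (if w[i]? = some true then 1 else 0) := by
  unfold starIdx
  rw [count_take_succ]
  omega

end ChunkA
section ChunkB

lemma starIdx_le_length (w : List Bool) {i : ℕ} (hi : i ≤ w.length) :
    starIdx w i ≤ (star w).length := by
  unfold starIdx
  rw [length_star]
  have : (w.take i).count true ≤ w.count true :=
    (List.take_prefix i w).sublist.count_le true
  omega

lemma starIdx_lt_length (w : List Bool) {i : ℕ} (hi : i < w.length) :
    starIdx w i < (star w).length := by
  unfold starIdx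
  rw [length_star]
  have : (w.take i).count true ≤ w.count true :=
    (List.take_prefix i w).sublist.count_le true
  omega

lemma starIdx_ins_lt_length (w : List Bool) {j : ℕ} (hj : j < w.length)
    (hjv : w[j]? = some true) : starIdx w j + 1 < (star w).length := by
  have h := starIdx_succ w j
  rw [hjv] at h
  simp at h
  have := starIdx_le_length w (show j + 1 ≤ w.length from hj)
  omega

lemma starIdx_strictMono (w : List Bool) : StrictMono (starIdx w) := by
  apply strictMono_nat_of_lt_succ
  intro i
  have h := starIdx_succ w i
  split at h <;> omega

lemma starIdx_lt_iff (w : List Bool) {i j : ℕ} : starIdx w i < starIdx w j ↔ i < j :=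
  (starIdx_strictMono w).lt_iff_lt

lemma starIdx_inj (w : List Bool) {i j : ℕ} (h : starIdx w i = starIdx w j) : i = j :=
  (starIdx_strictMono w).injective h

lemma starIdx_ins_lt_iff (w : List Bool) {j i : ℕ} (hj : w[j]? = some true) :
    starIdx w j + 1 < starIdx w i ↔ j < i := by
  constructor
  · intro h
    by_contra hc
    push_neg at hc
    have := (starIdx_strictMono w).monotone hc
    omega
  · intro h
    have h1 : j + 1 ≤ i := h
    have h2 : starIdx w (j+1) ≤ starIdx w i := (starIdx_strictMono w).monotone h1
    have h3 := starIdx_succ w j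
    rw [hj] at h3
    simp at h3
    omega

lemma starIdx_ne_ins (w : List Bool) {i j : ℕ} (hj : w[j]? = some true) :
    starIdx w i ≠ starIdx w j + 1 := by
  intro h
  rcases lt_trichotomy i j with hc | hc | hc
  · have := (starIdx_strictMono w) hc
    omega
  · subst hc; omega
  · have h1 : j + 1 ≤ i := hc
    have h2 : starIdx w (j+1) ≤ starIdx w i := (starIdx_strictMono w).monotone h1
    have h3 := starIdx_succ w j
    rw [hj] at h3
    simp at h3
    omega

lemma take_star (w : List Bool) {i : ℕ} (hi : i ≤ w.length) :
    (star w).take (starIdx w i) = star (w.take i) := by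
  have key : star w = star (w.take i) ++ star (w.drop i) := by
    rw [← star_append, List.take_append_drop]
  rw [key]
  have hlen : (star (w.take i)).length = starIdx w i := by
    rw [length_star, List.length_take]
    unfold starIdx
    omega
  rw [← hlen, List.take_left]

lemma take_star_ins (w : List Bool) {j : ℕ} (hj : w[j]? = some true) :
    (star w).take (starIdx w j + 1) = star (w.take j) ++ [true] := by
  have hjl : j < w.length := by
    by_contra hc
    push_neg at hc
    rw [List.getElem?_eq_none hc] at hj
    exact nomatch hj
  have hts : w.take (j+1) = w.take j ++ [true] := by
    rw [List.take_succ] at *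
    rw [hj]
    rfl
  have key : star w = star (w.take j) ++ ([true, false] ++ star (w.drop (j+1))) := by
    rw [show star (w.take j) ++ ([true, false] ++ star (w.drop (j+1)))
        = star (w.take j ++ [true]) ++ star (w.drop (j+1)) by
      rw [star_append, List.append_assoc]; rfl]
    rw [← star_append, ← hts, List.take_append_drop]
  rw [key]
  have hlen : (star (w.take j)).length = starIdx w j := by
    rw [length_star, List.length_take]
    unfold starIdx
    omega
  rw [← hlen, List.take_append]
  simp

lemma get?_star (w : List Bool) {i : ℕ} (hi : i < w.length) :
    (star w)[starIdx w i]? = w[i]? := by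
  have key : star w = star (w.take i) ++ star (w.drop i) := by
    rw [← star_append, List.take_append_drop]
  rw [key]
  have hlen : (star (w.take i)).length = starIdx w i := by
    rw [length_star, List.length_take]
    unfold starIdx
    omega
  rw [List.getElem?_append_right (le_of_eq hlen), hlen, Nat.sub_self]
  have hdrop : w.drop i = w[i] :: w.drop (i+1) := List.drop_eq_getElem_cons hi
  rw [hdrop]
  have : w[i]? = some w[i] := by
    rw [List.getElem?_eq_getElem hi]
  rw [this]
  cases hwi : w[i] <;> simp [star_cons_true, star_cons_false]

lemma get?_star_ins (w : List Bool) {j : ℕ} (hj : w[j]? = some true) :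
    (star w)[starIdx w j + 1]? = some false := by
  have hjl : j < w.length := by
    by_contra hc
    push_neg at hc
    rw [List.getElem?_eq_none hc] at hj
    exact nomatch hj
  have key : star w = star (w.take j) ++ star (w.drop j) := by
    rw [← star_append, List.take_append_drop]
  rw [key]
  have hlen : (star (w.take j)).length = starIdx w j := by
    rw [length_star, List.length_take]
    unfold starIdx
    omega
  rw [List.getElem?_append_right (by omega), hlen, Nat.add_sub_cancel_left]
  have hdrop : w.drop j = w[j] :: w.drop (j+1) := List.drop_eq_getElem_cons hjl
  have : w[j] = true := by
    rw [List.getElem?_eq_getElem hjl] at hj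
    exact Option.some.inj hj
  rw [hdrop, this]
  rfl

end ChunkB
section ChunkC

lemma starIdx_cons (b : Bool) (w : List Bool) (i : ℕ) :
    starIdx (b :: w) (i+1) = starIdx w i + 1 + (if b = true then 1 else 0) := by
  unfold starIdx
  simp [List.count_cons]
  cases b <;> simp <;> omega

lemma sum_star {M : Type*} [AddCommMonoid M] (w : List Bool) (f : ℕ → M) :
    ∑ t ∈ Finset.range (star w).length, f t
      = (∑ i ∈ Finset.range w.length, f (starIdx w i))
        + ∑ j ∈ Finset.range w.length,
            (if w[j]? = some true then f (starIdx w j + 1) else 0) := by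
  induction w generalizing f with
  | nil => simp [show star ([] : List Bool) = [] from rfl]
  | cons b v ih =>
    cases b
    · rw [star_cons_false, List.length_cons, Finset.sum_range_succ' f,
        ih (fun t => f (t+1)), List.length_cons,
        Finset.sum_range_succ' (fun i => f (starIdx (false::v) i)),
        Finset.sum_range_succ'
          (fun j => if (false::v)[j]? = some true then f (starIdx (false::v) j + 1) else 0)]
      simp only [starIdx_cons, starIdx_zero]
      simp
      abel
    · rw [star_cons_true, List.length_cons, List.length_cons, Finset.sum_range_succ' f,
        Finset.sum_range_succ' (fun t => f (t+1)),
        ih (fun t => f (t+2)), List.length_cons,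
        Finset.sum_range_succ' (fun i => f (starIdx (true::v) i)),
        Finset.sum_range_succ'
          (fun j => if (true::v)[j]? = some true then f (starIdx (true::v) j + 1) else 0)]
      simp only [starIdx_cons, starIdx_zero]
      simp
      abel

lemma classify (w : List Bool) : ∀ t, t < (star w).length →
    (∃ i, i < w.length ∧ t = starIdx w i) ∨
      (∃ j, j < w.length ∧ w[j]? = some true ∧ t = starIdx w j + 1) := by
  induction w with
  | nil => simp [show star ([] : List Bool) = [] from rfl]
  | cons b v ih =>
    intro t ht
    cases b
    · rw [star_cons_false, List.length_cons] at ht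
      match t with
      | 0 => exact Or.inl ⟨0, by simp, rfl⟩
      | Nat.succ t =>
        rcases ih t (by omega) with ⟨i, hi, rfl⟩ | ⟨j, hj, hjv, rfl⟩
        · exact Or.inl ⟨i+1, by simp only [List.length_cons]; omega, by rw [starIdx_cons]; simp⟩
        · exact Or.inr ⟨j+1, by simp only [List.length_cons]; omega, by simpa using hjv,
            by rw [starIdx_cons]; simp⟩
    · rw [star_cons_true, List.length_cons, List.length_cons] at ht
      match t with
      | 0 => exact Or.inl ⟨0, by simp, rfl⟩
      | 1 => exact Or.inr ⟨0, by simp, by simp, by simp [starIdx_zero]⟩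
      | Nat.succ (Nat.succ t) =>
        rcases ih t (by omega) with ⟨i, hi, rfl⟩ | ⟨j, hj, hjv, rfl⟩
        · exact Or.inl ⟨i+1, by simp only [List.length_cons]; omega,
            by rw [starIdx_cons]; simp⟩
        · exact Or.inr ⟨j+1, by simp only [List.length_cons]; omega, by simpa using hjv,
            by rw [starIdx_cons]; simp⟩

end ChunkC
section ChunkD

def lev (m n : ℕ) (w : List Bool) (t : ℕ) : ℤ :=
  (n : ℤ) * ptX w t - (m : ℤ) * ptY w t

lemma ptX_zero (w : List Bool) : ptX w 0 = 0 := by simp [ptX]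
lemma ptY_zero (w : List Bool) : ptY w 0 = 0 := by simp [ptY]
lemma lev_zero (m n : ℕ) (w : List Bool) : lev m n w 0 = 0 := by
  simp [lev, ptX_zero, ptY_zero]

lemma ptX_succ (w : List Bool) (t : ℕ) :
    ptX w (t+1) = ptX w t + (if w[t]? = some false then 1 else 0) := by
  unfold ptX
  rw [count_take_succ]
  split_ifs <;> push_cast <;> ring

lemma ptY_succ (w : List Bool) (t : ℕ) :
    ptY w (t+1) = ptY w t + (if w[t]? = some true then 1 else 0) := by
  unfold ptY
  rw [count_take_succ]
  split_ifs <;> push_cast <;> ring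

lemma get?_false_of_ne_true {w : List Bool} {t : ℕ} (ht : t < w.length)
    (h : ¬ w[t]? = some true) : w[t]? = some false := by
  rw [List.getElem?_eq_getElem ht] at *
  cases hwt : w[t]
  · rfl
  · exact absurd (by rw [hwt]) h

lemma lev_succ_false {m n : ℕ} {w : List Bool} {t : ℕ} (h : w[t]? = some false) :
    lev m n w (t+1) = lev m n w t + n := by
  unfold lev
  rw [ptX_succ, ptY_succ, h]
  simp
  ring

lemma lev_succ_true {m n : ℕ} {w : List Bool} {t : ℕ} (h : w[t]? = some true) :
    lev m n w (t+1) = lev m n w t - m := by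
  unfold lev
  rw [ptX_succ, ptY_succ, h]
  simp
  ring

section Dyck
variable {m n : ℕ} {w : List Bool} (hw : IsDyck m n w)
include hw

lemma length_dyck : w.length = m + n := by
  rw [← count_ft w, hw.1, hw.2.1]

lemma ptX_le (t : ℕ) : ptX w t ≤ m := by
  unfold ptX
  have : (w.take t).count false ≤ w.count false :=
    (List.take_prefix t w).sublist.count_le false
  rw [hw.1] at this
  exact_mod_cast this

lemma ptY_le (t : ℕ) : ptY w t ≤ n := by
  unfold ptY
  have : (w.take t).count true ≤ w.count true :=
    (List.take_prefix t w).sublist.count_le true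
  rw [hw.2.1] at this
  exact_mod_cast this

omit hw in
lemma ptX_nonneg (w : List Bool) (t : ℕ) : 0 ≤ ptX w t := Int.natCast_nonneg _
omit hw in
lemma ptY_nonneg (w : List Bool) (t : ℕ) : 0 ≤ ptY w t := Int.natCast_nonneg _

omit hw in
lemma ptXY (w : List Bool) {t : ℕ} (ht : t ≤ w.length) : ptX w t + ptY w t = t := by
  unfold ptX ptY
  have := count_ft (w.take t)
  rw [List.length_take] at this
  have h2 : min t w.length = t := by omega
  rw [h2] at this
  exact_mod_cast this

lemma lev_nonpos (t : ℕ) : lev m n w t ≤ 0 := by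
  have h := hw.2.2 (w.take t) (by rw [List.mem_inits]; exact List.take_prefix t w)
  unfold lev ptX ptY
  have : (n : ℤ) * ((w.take t).count false : ℤ) ≤ (m : ℤ) * ((w.take t).count true : ℤ) := by
    exact_mod_cast h
  linarith

lemma lev_length : lev m n w w.length = 0 := by
  unfold lev ptX ptY
  rw [List.take_length, hw.1, hw.2.1]
  ring

lemma lev_inj (hm : 0 < m) (hn : 0 < n) (hco : Nat.Coprime m n)
    {s t : ℕ} (hs1 : 1 ≤ s) (hsL : s ≤ w.length) (ht1 : 1 ≤ t) (htL : t ≤ w.length)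
    (h : lev m n w s = lev m n w t) : s = t := by
  have h2 : (n:ℤ) * (ptX w s - ptX w t) = (m:ℤ) * (ptY w s - ptY w t) := by
    unfold lev at h; ring_nf; ring_nf at h; linarith
  have hcop : IsCoprime (m:ℤ) (n:ℤ) := by
    rw [Int.isCoprime_iff_gcd_eq_one]
    simpa using hco
  have hdvd : (m:ℤ) ∣ (ptX w s - ptX w t) := by
    apply hcop.dvd_of_dvd_mul_left
    exact ⟨ptY w s - ptY w t, by linarith⟩
  rcases hdvd with ⟨k, hk⟩
  have hxs1 := ptX_le hw s; have hxs0 := ptX_nonneg w s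
  have hxt1 := ptX_le hw t; have hxt0 := ptX_nonneg w t
  have hys1 := ptY_le hw s; have hys0 := ptY_nonneg w s
  have hyt1 := ptY_le hw t; have hyt0 := ptY_nonneg w t
  have hs := ptXY w hsL
  have ht := ptXY w htL
  have hm' : (0:ℤ) < m := by exact_mod_cast hm
  have hk1 : -1 ≤ k := by nlinarith
  have hk2 : k ≤ 1 := by nlinarith
  interval_cases k
  · -- ptX w s - ptX w t = -m : xs = 0, xt = m, ys - yt = -n
    have hx : ptX w s = 0 ∧ ptX w t = m := by constructor <;> linarith
    have hy : (m:ℤ) * (ptY w s - ptY w t) = m * (-(n:ℤ)) := by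
      rw [← h2, hk]; ring
    have hy2 : ptY w s - ptY w t = -(n:ℤ) := by
      have := mul_left_cancel₀ (show (m:ℤ) ≠ 0 by positivity) hy
      linarith
    -- then ys = 0, so s = 0, contradiction
    have : ptY w s = 0 := by linarith
    have : (s:ℤ) = 0 := by rw [← hs, hx.1, this]; ring
    omega
  · have hx : ptX w s = ptX w t := by linarith
    have hy : (m:ℤ) * (ptY w s - ptY w t) = 0 := by rw [← h2, hx]; ring
    have hy2 : ptY w s = ptY w t := by
      rcases mul_eq_zero.1 hy with h' | h'
      · exfalso; rw [h'] at hm'; exact lt_irrefl _ hm'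
      · linarith
    have : (s:ℤ) = t := by rw [← hs, ← ht, hx, hy2]
    exact_mod_cast this
  · have hx : ptX w s = m ∧ ptX w t = 0 := by constructor <;> linarith
    have hy : (m:ℤ) * (ptY w s - ptY w t) = m * (n:ℤ) := by
      rw [← h2, hk]; ring
    have hy2 : ptY w s - ptY w t = (n:ℤ) := by
      have := mul_left_cancel₀ (show (m:ℤ) ≠ 0 by positivity) hy
      linarith
    have : ptY w t = 0 := by linarith
    have : (t:ℤ) = 0 := by rw [← ht, hx.2, this]; ring
    omega

end Dyck

end ChunkD
section ChunkE

lemma lev_cast (m n : ℕ) (w : List Bool) (t : ℕ) :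
    ((lev m n w t : ℤ) : ℝ) = (n:ℝ) * ((ptX w t : ℤ):ℝ) - (m:ℝ) * ((ptY w t : ℤ):ℝ) := by
  unfold lev; push_cast; ring

lemma MB_iff {m n : ℕ} (hm : 0 < m) (hn : 0 < n) (w : List Bool) (i j : ℕ) :
    MeetsBoth m n w i j ↔
      lev m n w i ≤ lev m n w j ∧ lev m n w j ≤ lev m n w i + m + n := by
  have hm' : (0:ℝ) < m := by exact_mod_cast hm
  have hn' : (0:ℝ) < n := by exact_mod_cast hn
  constructor
  · rintro ⟨c, ⟨x, hx1, hx2, hx3⟩, ⟨y, hy1, hy2, hy3⟩⟩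
    have e1 : (n:ℝ) * ((ptX w i : ℤ):ℝ) ≤ n * x := by
      apply mul_le_mul_of_nonneg_left hx1 (le_of_lt hn')
    have e2 : (n:ℝ) * x ≤ n * (((ptX w i : ℤ):ℝ) + 1) := by
      apply mul_le_mul_of_nonneg_left hx2 (le_of_lt hn')
    have e3 : (m:ℝ) * ((ptY w j : ℤ):ℝ) ≤ m * y := by
      apply mul_le_mul_of_nonneg_left hy1 (le_of_lt hm')
    have e4 : (m:ℝ) * y ≤ m * (((ptY w j : ℤ):ℝ) + 1) := by
      apply mul_le_mul_of_nonneg_left hy2 (le_of_lt hm')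
    constructor
    · have : ((lev m n w i : ℤ):ℝ) ≤ ((lev m n w j : ℤ):ℝ) := by
        rw [lev_cast, lev_cast]; nlinarith
      exact_mod_cast this
    · have : ((lev m n w j : ℤ):ℝ) ≤ ((lev m n w i : ℤ):ℝ) + m + n := by
        rw [lev_cast, lev_cast]; nlinarith
      exact_mod_cast this
  · rintro ⟨h1, h2⟩
    have h1' : ((lev m n w i : ℤ):ℝ) ≤ ((lev m n w j : ℤ):ℝ) := by exact_mod_cast h1
    have h2' : ((lev m n w j : ℤ):ℝ) ≤ ((lev m n w i : ℤ):ℝ) + m + n := by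
      have : ((lev m n w j : ℤ):ℝ) ≤ (((lev m n w i + m + n) : ℤ):ℝ) := by exact_mod_cast h2
      push_cast at this
      linarith
    rw [lev_cast, lev_cast] at h1' h2'
    set A := (n:ℝ) * ((ptX w i : ℤ):ℝ) - (m:ℝ) * ((ptY w i : ℤ):ℝ) with hA
    set B := (n:ℝ) * ((ptX w j : ℤ):ℝ) - (m:ℝ) * ((ptY w j : ℤ):ℝ) with hB
    refine ⟨max A (B - m), ⟨(max A (B - m) + m * ((ptY w i : ℤ):ℝ)) / n, ?_, ?_, ?_⟩,
      ⟨((n:ℝ) * ((ptX w j : ℤ):ℝ) - max A (B - m)) / m, ?_, ?_, ?_⟩⟩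
    · rw [le_div_iff₀ hn']
      have := le_max_left A (B - m)
      nlinarith
    · rw [div_le_iff₀ hn']
      have := max_le (by linarith : A ≤ A + n) (by linarith : B - m ≤ A + n)
      nlinarith
    · field_simp; ring
    · rw [le_div_iff₀ hm']
      have := max_le (by linarith : A ≤ B) (by linarith : B - m ≤ B)
      nlinarith
    · rw [div_le_iff₀ hm']
      have := le_max_right A (B - m)
      nlinarith
    · field_simp; ring
  
lemma lineHitsH_iff {m n : ℕ} (hn : 0 < n) (w : List Bool) (px py : ℤ) (i : ℕ) :
    lineHitsH m n w px py i ↔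
      (w[i]? = some false ∧
        (lev m n w i ≤ (n:ℤ) * px - (m:ℤ) * py ∧
          (n:ℤ) * px - (m:ℤ) * py ≤ lev m n w i + n)) := by
  have hn' : (0:ℝ) < n := by exact_mod_cast hn
  unfold lineHitsH
  constructor
  · rintro ⟨hgf, x, hx1, hx2, hx3⟩
    refine ⟨hgf, ?_, ?_⟩
    · have : ((lev m n w i : ℤ):ℝ) ≤ (((n:ℤ) * px - (m:ℤ) * py : ℤ):ℝ) := by
        rw [lev_cast]; push_cast
        nlinarith [mul_le_mul_of_nonneg_left hx1 (le_of_lt hn')]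
      exact_mod_cast this
    · have : (((n:ℤ) * px - (m:ℤ) * py : ℤ):ℝ) ≤ (((lev m n w i + n : ℤ)):ℝ) := by
        rw [show (((lev m n w i + n : ℤ)):ℝ) = ((lev m n w i : ℤ):ℝ) + n by push_cast; ring,
          lev_cast]
        push_cast
        nlinarith [mul_le_mul_of_nonneg_left hx2 (le_of_lt hn')]
      exact_mod_cast this
  · rintro ⟨hgf, h1, h2⟩
    refine ⟨hgf, ((((n:ℤ) * px - (m:ℤ) * py : ℤ):ℝ) + m * ((ptY w i : ℤ):ℝ)) / n, ?_, ?_, ?_⟩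
    · rw [le_div_iff₀ hn']
      have h1' : ((lev m n w i : ℤ):ℝ) ≤ (((n:ℤ) * px - (m:ℤ) * py : ℤ):ℝ) := by
        exact_mod_cast h1
      rw [lev_cast] at h1'
      nlinarith
    · rw [div_le_iff₀ hn']
      have h2' : (((n:ℤ) * px - (m:ℤ) * py : ℤ):ℝ) ≤ ((lev m n w i : ℤ):ℝ) + n := by
        have : (((n:ℤ) * px - (m:ℤ) * py : ℤ):ℝ) ≤ (((lev m n w i + n : ℤ)):ℝ) := by
          exact_mod_cast h2
        push_cast at this ⊢
        push_cast [lev_cast] at *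
        linarith
      rw [lev_cast] at h2'
      nlinarith
    · push_cast
      field_simp
      ring

end ChunkE
section ChunkF

lemma get?_lt_length {w : List Bool} {j : ℕ} {b : Bool} (h : w[j]? = some b) :
    j < w.length := by
  by_contra hc
  push_neg at hc
  rw [List.getElem?_eq_none hc] at h
  exact nomatch h

lemma ptX_star (w : List Bool) {i : ℕ} (hi : i ≤ w.length) :
    ptX (star w) (starIdx w i) = ptX w i + ptY w i := by
  unfold ptX ptY
  rw [take_star w hi, count_false_star]
  push_cast
  ring

lemma ptY_star (w : List Bool) {i : ℕ} (hi : i ≤ w.length) :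
    ptY (star w) (starIdx w i) = ptY w i := by
  unfold ptY
  rw [take_star w hi, count_true_star]

lemma ptX_star_ins (w : List Bool) {j : ℕ} (hj : w[j]? = some true) :
    ptX (star w) (starIdx w j + 1) = ptX w j + ptY w j := by
  unfold ptX ptY
  rw [take_star_ins w hj, List.count_append, count_false_star]
  push_cast
  simp

lemma ptY_star_ins (w : List Bool) {j : ℕ} (hj : w[j]? = some true) :
    ptY (star w) (starIdx w j + 1) = ptY w j + 1 := by
  unfold ptY
  rw [take_star_ins w hj, List.count_append, count_true_star]
  push_cast
  simp

lemma lev_star (m n : ℕ) (w : List Bool) {i : ℕ} (hi : i ≤ w.length) :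
    lev (m+n) n (star w) (starIdx w i) = lev m n w i := by
  unfold lev
  rw [ptX_star w hi, ptY_star w hi]
  push_cast
  ring

lemma lev_star_ins (m n : ℕ) (w : List Bool) {j : ℕ} (hj : w[j]? = some true) :
    lev (m+n) n (star w) (starIdx w j + 1) = lev m n w (j+1) - n := by
  unfold lev
  rw [ptX_star_ins w hj, ptY_star_ins w hj, ptX_succ, ptY_succ, hj]
  simp
  push_cast
  ring

end ChunkF

section ChunkG

lemma sum_range_restrict (f : ℕ → ℤ) {t L : ℕ} (h : t ≤ L) :
    ∑ s ∈ Finset.range L, (if s < t then f s else 0) = ∑ s ∈ Finset.range t, f s := by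
  rw [← Finset.sum_filter]
  apply Finset.sum_congr
  · ext s
    simp only [Finset.mem_filter, Finset.mem_range]
    omega
  · intros; rfl

lemma crossing (m n : ℕ) (w : List Bool) (c : ℤ) :
    ∀ t, t ≤ w.length →
    ∑ s ∈ Finset.range t,
      ((if w[s]? = some false ∧ c - n ≤ lev m n w s ∧ lev m n w s ≤ c - 1
          then (1:ℤ) else 0)
        - (if w[s]? = some true ∧ c - m ≤ lev m n w (s+1) ∧ lev m n w (s+1) ≤ c - 1
            then (1:ℤ) else 0))
      = (if c ≤ lev m n w t then 1 else 0) - (if c ≤ lev m n w 0 then 1 else 0) := by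
  intro t
  induction t with
  | zero => simp
  | succ t ih =>
    intro ht
    rw [Finset.sum_range_succ, ih (by omega)]
    have ht' : t < w.length := by omega
    by_cases hb : w[t]? = some true
    · have hst := lev_succ_true (m := m) (n := n) hb
      have h1 : (w[t]? = some false) = False := by simp only [hb]; simp
      have h2 : (w[t]? = some true) = True := by simp only [hb]
      simp only [h1, h2]
      simp only [true_and, false_and, if_false]
      split_ifs <;> omega
    · have hf : w[t]? = some false := get?_false_of_ne_true ht' hb
      have hst := lev_succ_false (m := m) (n := n) hf
      have h1 : (w[t]? = some false) = True := by simp only [hf]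
      have h2 : (w[t]? = some true) = False := by simp only [hf]; simp
      simp only [h1, h2]
      simp only [true_and, false_and, if_false]
      split_ifs <;> omega

end ChunkG
section ChunkH

open Finset

lemma sum_ite_lt {L t : ℕ} (h : t ≤ L) (C : ℕ → Prop) [DecidablePred C] :
    ∑ i ∈ Finset.range L, (if i < t ∧ C i then (1:ℤ) else 0)
      = ∑ i ∈ Finset.range t, (if C i then (1:ℤ) else 0) := by
  rw [← sum_range_restrict (fun i => if C i then (1:ℤ) else 0) h]
  apply Finset.sum_congr rfl
  intro i _
  by_cases h1 : i < t <;> by_cases h2 : C i <;> simp [h1, h2]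

lemma sum_ite_and_const {s : Finset ℕ} (p : Prop) [Decidable p]
    (C : ℕ → Prop) [DecidablePred C] :
    ∑ i ∈ s, (if p ∧ C i then (1:ℤ) else 0)
      = if p then ∑ i ∈ s, (if C i then (1:ℤ) else 0) else 0 := by
  by_cases hp : p <;> simp [hp]

section Core

variable {m n : ℕ} {w : List Bool}

/-- up-crossing / down-crossing balance through the line of an outer vertex,
    restricted to the part of the path before step `j`. -/
lemma crossj (hw : IsDyck m n w) {j : ℕ} (hj : j < w.length)
    (hq : w[j]? = some true) :
    ∑ i ∈ Finset.range w.length,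
        (if i < j ∧ w[i]? = some false ∧
            lev m n w (j+1) - 2*n ≤ lev m n w i ∧ lev m n w i ≤ lev m n w (j+1) - n - 1
          then (1:ℤ) else 0)
      = ∑ i ∈ Finset.range w.length,
          (if i < j ∧ w[i]? = some true ∧
              lev m n w (j+1) - m - n ≤ lev m n w (i+1) ∧
                lev m n w (i+1) ≤ lev m n w (j+1) - n - 1
            then (1:ℤ) else 0) := by
  set c : ℤ := lev m n w (j+1) - n with hc
  have hcr := crossing m n w c j (le_of_lt hj)
  have hrhs0 : (if c ≤ lev m n w j then (1:ℤ) else 0) - (if c ≤ lev m n w 0 then 1 else 0) = 0 := by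
    have h1 : lev m n w (j+1) = lev m n w j - m := lev_succ_true hq
    have h2 : lev m n w (j+1) ≤ 0 := lev_nonpos hw (j+1)
    rw [lev_zero]
    have hc1 : c ≤ lev m n w j := by omega
    have hc2 : c ≤ 0 := by omega
    simp [hc1, hc2]
  rw [hrhs0, Finset.sum_sub_distrib, sub_eq_zero] at hcr
  rw [sum_ite_lt (le_of_lt hj), sum_ite_lt (le_of_lt hj)]
  have e1 : ∀ i, (w[i]? = some false ∧
      lev m n w (j+1) - 2*n ≤ lev m n w i ∧ lev m n w i ≤ lev m n w (j+1) - n - 1)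
      ↔ (w[i]? = some false ∧ c - n ≤ lev m n w i ∧ lev m n w i ≤ c - 1) := by
    intro i; constructor <;> rintro ⟨h1, h2, h3⟩ <;> exact ⟨h1, by omega, by omega⟩
  have e2 : ∀ i, (w[i]? = some true ∧
      lev m n w (j+1) - m - n ≤ lev m n w (i+1) ∧ lev m n w (i+1) ≤ lev m n w (j+1) - n - 1)
      ↔ (w[i]? = some true ∧ c - m ≤ lev m n w (i+1) ∧ lev m n w (i+1) ≤ c - 1) := by
    intro i; constructor <;> rintro ⟨h1, h2, h3⟩ <;> exact ⟨h1, by omega, by omega⟩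
  calc ∑ i ∈ Finset.range j, (if w[i]? = some false ∧
          lev m n w (j+1) - 2*n ≤ lev m n w i ∧ lev m n w i ≤ lev m n w (j+1) - n - 1
        then (1:ℤ) else 0)
      = ∑ i ∈ Finset.range j, (if w[i]? = some false ∧
          c - n ≤ lev m n w i ∧ lev m n w i ≤ c - 1 then (1:ℤ) else 0) := by
        apply Finset.sum_congr rfl; intro i _; exact if_congr (e1 i) rfl rfl
    _ = ∑ i ∈ Finset.range j, (if w[i]? = some true ∧
          c - m ≤ lev m n w (i+1) ∧ lev m n w (i+1) ≤ c - 1 then (1:ℤ) else 0) := hcr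
    _ = _ := by
        apply Finset.sum_congr rfl; intro i _; exact if_congr (e2 i).symm rfl rfl

/-- up-crossing / down-crossing balance over the whole path. -/
lemma crossL (hw : IsDyck m n w) {j : ℕ} (hj : j < w.length)
    (hq : w[j]? = some true) :
    ∑ i ∈ Finset.range w.length,
        (if w[i]? = some false ∧
            lev m n w (j+1) - 2*n ≤ lev m n w i ∧ lev m n w i ≤ lev m n w (j+1) - n - 1
          then (1:ℤ) else 0)
      = ∑ i ∈ Finset.range w.length,
          (if w[i]? = some true ∧
              lev m n w (j+1) - m - n ≤ lev m n w (i+1) ∧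
                lev m n w (i+1) ≤ lev m n w (j+1) - n - 1
            then (1:ℤ) else 0) := by
  set c : ℤ := lev m n w (j+1) - n with hc
  have hcr := crossing m n w c w.length (le_refl _)
  have hrhs0 : (if c ≤ lev m n w w.length then (1:ℤ) else 0) - (if c ≤ lev m n w 0 then 1 else 0) = 0 := by
    rw [lev_zero, lev_length hw]; ring
  rw [hrhs0, Finset.sum_sub_distrib, sub_eq_zero] at hcr
  have e1 : ∀ i, (w[i]? = some false ∧
      lev m n w (j+1) - 2*n ≤ lev m n w i ∧ lev m n w i ≤ lev m n w (j+1) - n - 1)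
      ↔ (w[i]? = some false ∧ c - n ≤ lev m n w i ∧ lev m n w i ≤ c - 1) := by
    intro i; constructor <;> rintro ⟨h1, h2, h3⟩ <;> exact ⟨h1, by omega, by omega⟩
  have e2 : ∀ i, (w[i]? = some true ∧
      lev m n w (j+1) - m - n ≤ lev m n w (i+1) ∧ lev m n w (i+1) ≤ lev m n w (j+1) - n - 1)
      ↔ (w[i]? = some true ∧ c - m ≤ lev m n w (i+1) ∧ lev m n w (i+1) ≤ c - 1) := by
    intro i; constructor <;> rintro ⟨h1, h2, h3⟩ <;> exact ⟨h1, by omega, by omega⟩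
  calc ∑ i ∈ Finset.range w.length, (if w[i]? = some false ∧
          lev m n w (j+1) - 2*n ≤ lev m n w i ∧ lev m n w i ≤ lev m n w (j+1) - n - 1
        then (1:ℤ) else 0)
      = ∑ i ∈ Finset.range w.length, (if w[i]? = some false ∧
          c - n ≤ lev m n w i ∧ lev m n w i ≤ c - 1 then (1:ℤ) else 0) := by
        apply Finset.sum_congr rfl; intro i _; exact if_congr (e1 i) rfl rfl
    _ = ∑ i ∈ Finset.range w.length, (if w[i]? = some true ∧
          c - m ≤ lev m n w (i+1) ∧ lev m n w (i+1) ≤ c - 1 then (1:ℤ) else 0) := hcr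
    _ = _ := by
        apply Finset.sum_congr rfl; intro i _; exact if_congr (e2 i).symm rfl rfl

end Core

end ChunkH
section ChunkI

def Rpred (m n : ℕ) (w : List Bool) (j : ℕ) : Prop :=
  ∃ j', j' < w.length ∧ w[j']? = some true ∧ lev m n w (j'+1) < lev m n w (j+1)

variable {m n : ℕ} {w : List Bool}

lemma einj (hm : 0 < m) (hn : 0 < n) (hco : Nat.Coprime m n) (hw : IsDyck m n w)
    {i j : ℕ} (hi : i < w.length) (hj : j < w.length)
    (h : lev m n w (i+1) = lev m n w (j+1)) : i = j := by
  have := lev_inj hw hm hn hco (s := i+1) (t := j+1) (by omega) (by omega) (by omega) (by omega) h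
  omega

lemma core (hm : 0 < m) (hn : 0 < n) (hco : Nat.Coprime m n) (hw : IsDyck m n w) :
    (∑ j ∈ Finset.range w.length, ∑ i ∈ Finset.range w.length,
      if w[j]? = some true ∧ w[i]? = some false ∧ i < j ∧
          lev m n w (j+1) - 2*n ≤ lev m n w i ∧ lev m n w i ≤ lev m n w (j+1) - n - 1
        then (1:ℤ) else 0)
    + (∑ j ∈ Finset.range w.length, ∑ i ∈ Finset.range w.length,
      if w[j]? = some true ∧ w[i]? = some true ∧ j < i ∧
          lev m n w (j+1) - m - n ≤ lev m n w (i+1) ∧ lev m n w (i+1) ≤ lev m n w (j+1) + n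
        then (1:ℤ) else 0)
    = (∑ j ∈ Finset.range w.length, ∑ i ∈ Finset.range w.length,
      if w[j]? = some true ∧ Rpred m n w j ∧ w[i]? = some false ∧
          lev m n w (j+1) - 2*n ≤ lev m n w i ∧ lev m n w i ≤ lev m n w (j+1) - n
        then (1:ℤ) else 0)
    + (∑ j ∈ Finset.range w.length, ∑ i ∈ Finset.range w.length,
      if w[j]? = some true ∧ Rpred m n w j ∧ w[i]? = some true ∧ i ≠ j ∧
          lev m n w (j+1) - n ≤ lev m n w (i+1) ∧ lev m n w (i+1) ≤ lev m n w (j+1)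
        then (1:ℤ) else 0) := by
  set L := w.length with hL
  -- abbreviations as local notation through `have` statements
  -- E1 = ∑_j [Qj] Zlt j
  have hE1 : (∑ j ∈ Finset.range L, ∑ i ∈ Finset.range L,
      if w[j]? = some true ∧ w[i]? = some false ∧ i < j ∧
          lev m n w (j+1) - 2*n ≤ lev m n w i ∧ lev m n w i ≤ lev m n w (j+1) - n - 1
        then (1:ℤ) else 0)
      = ∑ j ∈ Finset.range L, ∑ i ∈ Finset.range L,
      (if w[j]? = some true ∧ i < j ∧ w[i]? = some true ∧
          lev m n w (j+1) - m - n ≤ lev m n w (i+1) ∧ lev m n w (i+1) ≤ lev m n w (j+1) - n - 1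
        then (1:ℤ) else 0) := by
    apply Finset.sum_congr rfl
    intro j hj
    rw [Finset.mem_range] at hj
    by_cases hq : w[j]? = some true
    · have h1 : (∑ i ∈ Finset.range L,
          if w[j]? = some true ∧ w[i]? = some false ∧ i < j ∧
              lev m n w (j+1) - 2*n ≤ lev m n w i ∧ lev m n w i ≤ lev m n w (j+1) - n - 1
            then (1:ℤ) else 0)
          = ∑ i ∈ Finset.range L,
          (if i < j ∧ w[i]? = some false ∧
              lev m n w (j+1) - 2*n ≤ lev m n w i ∧ lev m n w i ≤ lev m n w (j+1) - n - 1
            then (1:ℤ) else 0) := by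
        apply Finset.sum_congr rfl
        intro i _
        apply if_congr _ rfl rfl
        constructor
        · rintro ⟨_, a, b, c⟩; exact ⟨b, a, c⟩
        · rintro ⟨b, a, c⟩; exact ⟨hq, a, b, c⟩
      rw [h1, crossj hw hj hq]
      apply Finset.sum_congr rfl
      intro i _
      apply if_congr _ rfl rfl
      constructor
      · rintro ⟨a, b, c⟩; exact ⟨hq, a, b, c⟩
      · rintro ⟨_, a, b, c⟩; exact ⟨a, b, c⟩
    · apply Finset.sum_congr rfl
      intro i _
      rw [if_neg (by tauto), if_neg (by tauto)]
  -- T1 = ∑_j [Qj] Zfull j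
  have hT1 : (∑ j ∈ Finset.range L, ∑ i ∈ Finset.range L,
      if w[j]? = some true ∧ Rpred m n w j ∧ w[i]? = some false ∧
          lev m n w (j+1) - 2*n ≤ lev m n w i ∧ lev m n w i ≤ lev m n w (j+1) - n
        then (1:ℤ) else 0)
      = ∑ j ∈ Finset.range L, ∑ i ∈ Finset.range L,
      (if w[j]? = some true ∧ w[i]? = some true ∧
          lev m n w (j+1) - m - n ≤ lev m n w (i+1) ∧ lev m n w (i+1) ≤ lev m n w (j+1) - n - 1
        then (1:ℤ) else 0) := by
    apply Finset.sum_congr rfl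
    intro j hj
    rw [Finset.mem_range] at hj
    by_cases hq : w[j]? = some true
    · by_cases hr : Rpred m n w j
      · -- shrink window using injectivity, then crossL
        have h1 : (∑ i ∈ Finset.range L,
            if w[j]? = some true ∧ Rpred m n w j ∧ w[i]? = some false ∧
                lev m n w (j+1) - 2*n ≤ lev m n w i ∧ lev m n w i ≤ lev m n w (j+1) - n
              then (1:ℤ) else 0)
            = ∑ i ∈ Finset.range L,
            (if w[i]? = some false ∧
                lev m n w (j+1) - 2*n ≤ lev m n w i ∧ lev m n w i ≤ lev m n w (j+1) - n - 1
              then (1:ℤ) else 0) := by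
          apply Finset.sum_congr rfl
          intro i hi
          rw [Finset.mem_range] at hi
          apply if_congr _ rfl rfl
          constructor
          · rintro ⟨_, _, a, b, c⟩
            refine ⟨a, b, ?_⟩
            rcases lt_or_eq_of_le c with h' | h'
            · omega
            · exfalso
              have hstep : lev m n w (i+1) = lev m n w i + n := lev_succ_false a
              have : lev m n w (i+1) = lev m n w (j+1) := by omega
              have := einj hm hn hco hw hi hj this
              rw [this] at a
              rw [a] at hq
              exact Bool.noConfusion (Option.some.inj hq)
          · rintro ⟨a, b, c⟩; exact ⟨hq, hr, a, b, by omega⟩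
        rw [h1, crossL hw hj hq]
        apply Finset.sum_congr rfl
        intro i _
        apply if_congr _ rfl rfl
        constructor
        · rintro ⟨a, b⟩; exact ⟨hq, a, b⟩
        · rintro ⟨_, a, b⟩; exact ⟨a, b⟩
      · -- ¬Rpred: both sides are zero
        have h1 : (∑ i ∈ Finset.range L,
            if w[j]? = some true ∧ Rpred m n w j ∧ w[i]? = some false ∧
                lev m n w (j+1) - 2*n ≤ lev m n w i ∧ lev m n w i ≤ lev m n w (j+1) - n
              then (1:ℤ) else 0) = 0 := by
          apply Finset.sum_eq_zero
          intro i _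
          rw [if_neg (by tauto)]
        rw [h1]
        symm
        apply Finset.sum_eq_zero
        intro i hi
        rw [Finset.mem_range] at hi
        rw [if_neg]
        rintro ⟨_, a, b, c⟩
        exact hr ⟨i, hi, a, by omega⟩
    · apply Finset.sum_congr rfl
      intro i _
      rw [if_neg (by tauto), if_neg (by tauto)]
  -- Step 3: T1sum = E1sum + Pp
  have hkey3 : (∑ j ∈ Finset.range L, ∑ i ∈ Finset.range L,
      (if w[j]? = some true ∧ w[i]? = some true ∧
          lev m n w (j+1) - m - n ≤ lev m n w (i+1) ∧ lev m n w (i+1) ≤ lev m n w (j+1) - n - 1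
        then (1:ℤ) else 0))
      = (∑ j ∈ Finset.range L, ∑ i ∈ Finset.range L,
      (if w[j]? = some true ∧ i < j ∧ w[i]? = some true ∧
          lev m n w (j+1) - m - n ≤ lev m n w (i+1) ∧ lev m n w (i+1) ≤ lev m n w (j+1) - n - 1
        then (1:ℤ) else 0))
      + (∑ j ∈ Finset.range L, ∑ i ∈ Finset.range L,
      (if w[j]? = some true ∧ w[i]? = some true ∧ j < i ∧
          lev m n w (j+1) - m - n ≤ lev m n w (i+1) ∧ lev m n w (i+1) ≤ lev m n w (j+1) - n - 1
        then (1:ℤ) else 0)) := by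
    rw [← Finset.sum_add_distrib]
    apply Finset.sum_congr rfl
    intro j _
    rw [← Finset.sum_add_distrib]
    apply Finset.sum_congr rfl
    intro i _
    by_cases hq : w[j]? = some true <;> by_cases hqi : w[i]? = some true
    · by_cases hij : i = j
      · subst hij
        rw [if_neg (by rintro ⟨_, _, _, h⟩; omega), if_neg (by omega),
          if_neg (by rintro ⟨_, _, h, _⟩; omega)]
        ring
      · simp only [hq, hqi]
        simp only [eq_self_iff_true, true_and]
        split_ifs <;> omega
    all_goals
      rw [if_neg (by tauto), if_neg (by tauto), if_neg (by tauto)]; ring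
  -- Step 4a: drop Rpred from T2
  have hT2 : (∑ j ∈ Finset.range L, ∑ i ∈ Finset.range L,
      (if w[j]? = some true ∧ Rpred m n w j ∧ w[i]? = some true ∧ i ≠ j ∧
          lev m n w (j+1) - n ≤ lev m n w (i+1) ∧ lev m n w (i+1) ≤ lev m n w (j+1)
        then (1:ℤ) else 0))
      = (∑ j ∈ Finset.range L, ∑ i ∈ Finset.range L,
      (if w[j]? = some true ∧ w[i]? = some true ∧ i ≠ j ∧
          lev m n w (j+1) - n ≤ lev m n w (i+1) ∧ lev m n w (i+1) ≤ lev m n w (j+1)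
        then (1:ℤ) else 0)) := by
    apply Finset.sum_congr rfl
    intro j hj
    rw [Finset.mem_range] at hj
    apply Finset.sum_congr rfl
    intro i hi
    rw [Finset.mem_range] at hi
    apply if_congr _ rfl rfl
    constructor
    · rintro ⟨a, _, b, c, d⟩; exact ⟨a, b, c, d⟩
    · rintro ⟨a, b, c, d, e⟩
      have hne : lev m n w (i+1) ≠ lev m n w (j+1) := fun h => c (einj hm hn hco hw hi hj h)
      exact ⟨a, ⟨i, hi, b, by omega⟩, b, c, d, e⟩
  -- Step 4b: split i ≠ j
  have hkey4 : (∑ j ∈ Finset.range L, ∑ i ∈ Finset.range L,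
      (if w[j]? = some true ∧ w[i]? = some true ∧ i ≠ j ∧
          lev m n w (j+1) - n ≤ lev m n w (i+1) ∧ lev m n w (i+1) ≤ lev m n w (j+1)
        then (1:ℤ) else 0))
      = (∑ j ∈ Finset.range L, ∑ i ∈ Finset.range L,
      (if w[j]? = some true ∧ w[i]? = some true ∧ i < j ∧
          lev m n w (j+1) - n ≤ lev m n w (i+1) ∧ lev m n w (i+1) ≤ lev m n w (j+1)
        then (1:ℤ) else 0))
      + (∑ j ∈ Finset.range L, ∑ i ∈ Finset.range L,
      (if w[j]? = some true ∧ w[i]? = some true ∧ j < i ∧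
          lev m n w (j+1) - n ≤ lev m n w (i+1) ∧ lev m n w (i+1) ≤ lev m n w (j+1)
        then (1:ℤ) else 0)) := by
    rw [← Finset.sum_add_distrib]
    apply Finset.sum_congr rfl
    intro j _
    rw [← Finset.sum_add_distrib]
    apply Finset.sum_congr rfl
    intro i _
    by_cases hq : w[j]? = some true <;> by_cases hqi : w[i]? = some true
    · simp only [hq, hqi]
      simp only [eq_self_iff_true, true_and]
      split_ifs <;> omega
    all_goals
      rw [if_neg (by tauto), if_neg (by tauto), if_neg (by tauto)]; ring
  -- Step 4c: swap summation order in the i<j half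
  have hswap : (∑ j ∈ Finset.range L, ∑ i ∈ Finset.range L,
      (if w[j]? = some true ∧ w[i]? = some true ∧ i < j ∧
          lev m n w (j+1) - n ≤ lev m n w (i+1) ∧ lev m n w (i+1) ≤ lev m n w (j+1)
        then (1:ℤ) else 0))
      = (∑ j ∈ Finset.range L, ∑ i ∈ Finset.range L,
      (if w[i]? = some true ∧ w[j]? = some true ∧ j < i ∧
          lev m n w (i+1) - n ≤ lev m n w (j+1) ∧ lev m n w (j+1) ≤ lev m n w (i+1)
        then (1:ℤ) else 0)) := by
    rw [Finset.sum_comm]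
  -- Step 4d: E2 pointwise split
  have hE2 : (∑ j ∈ Finset.range L, ∑ i ∈ Finset.range L,
      if w[j]? = some true ∧ w[i]? = some true ∧ j < i ∧
          lev m n w (j+1) - m - n ≤ lev m n w (i+1) ∧ lev m n w (i+1) ≤ lev m n w (j+1) + n
        then (1:ℤ) else 0)
      = (∑ j ∈ Finset.range L, ∑ i ∈ Finset.range L,
      (if w[i]? = some true ∧ w[j]? = some true ∧ j < i ∧
          lev m n w (i+1) - n ≤ lev m n w (j+1) ∧ lev m n w (j+1) ≤ lev m n w (i+1)
        then (1:ℤ) else 0))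
      + ((∑ j ∈ Finset.range L, ∑ i ∈ Finset.range L,
      (if w[j]? = some true ∧ w[i]? = some true ∧ j < i ∧
          lev m n w (j+1) - n ≤ lev m n w (i+1) ∧ lev m n w (i+1) ≤ lev m n w (j+1)
        then (1:ℤ) else 0))
      + (∑ j ∈ Finset.range L, ∑ i ∈ Finset.range L,
      (if w[j]? = some true ∧ w[i]? = some true ∧ j < i ∧
          lev m n w (j+1) - m - n ≤ lev m n w (i+1) ∧ lev m n w (i+1) ≤ lev m n w (j+1) - n - 1
        then (1:ℤ) else 0))) := by
    rw [← Finset.sum_add_distrib, ← Finset.sum_add_distrib]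
    apply Finset.sum_congr rfl
    intro j hj
    rw [Finset.mem_range] at hj
    rw [← Finset.sum_add_distrib, ← Finset.sum_add_distrib]
    apply Finset.sum_congr rfl
    intro i hi
    rw [Finset.mem_range] at hi
    by_cases hq : w[j]? = some true <;> by_cases hqi : w[i]? = some true
    · by_cases hij : j < i
      · have hne : lev m n w (i+1) ≠ lev m n w (j+1) :=
          fun h => (by omega : i ≠ j) (einj hm hn hco hw hi hj h)
        simp only [hq, hqi]
        simp only [eq_self_iff_true, true_and]
        split_ifs <;> omega
      · rw [if_neg (by tauto), if_neg (by tauto), if_neg (by tauto), if_neg (by tauto)]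
        ring
    all_goals
      rw [if_neg (by tauto), if_neg (by tauto), if_neg (by tauto), if_neg (by tauto)]; ring
  -- assemble
  rw [hE1, hT1, hT2, hE2, hkey3, hkey4, hswap]
  ring

end ChunkI
section ChunkJ

lemma Hcard (m n : ℕ) (hm : 0 < m) (hn : 0 < n) (w : List Bool) :
    ((Hpairs m n w).card : ℤ)
      = ∑ j ∈ Finset.range w.length, ∑ i ∈ Finset.range w.length,
          (if (i < j ∧ w[i]? = some false ∧ w[j]? = some true) ∧
              (lev m n w i ≤ lev m n w j ∧ lev m n w j ≤ lev m n w i + m + n)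
            then (1:ℤ) else 0) := by
  have h1 : ((Hpairs m n w).card : ℤ)
      = ∑ x ∈ (Finset.range w.length ×ˢ Finset.range w.length),
          (if ((x.1 < x.2 ∧ w[x.1]? = some false ∧ w[x.2]? = some true) ∧
              MeetsBoth m n w x.1 x.2) then (1:ℤ) else 0) := by
    rw [Hpairs, Opairs, Finset.filter_filter]
    rw [Finset.sum_boole]
  rw [h1, Finset.sum_product' (f := fun a b =>
    if ((a < b ∧ w[a]? = some false ∧ w[b]? = some true) ∧ MeetsBoth m n w a b)
      then (1:ℤ) else 0), Finset.sum_comm]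
  apply Finset.sum_congr rfl
  intro j _
  apply Finset.sum_congr rfl
  intro i _
  apply if_congr _ rfl rfl
  constructor
  · rintro ⟨a, b⟩
    exact ⟨a, ((MB_iff hm hn w i j).1 b).1, by
      have := ((MB_iff hm hn w i j).1 b).2; push_cast at this ⊢; linarith⟩
  · rintro ⟨a, b, c⟩
    exact ⟨a, (MB_iff hm hn w i j).2 ⟨b, by push_cast at c ⊢; linarith⟩⟩

end ChunkJ
section ChunkK

lemma Hstar_decomp (m n : ℕ) (hm : 0 < m) (hn : 0 < n) (hco : Nat.Coprime m n)
    (w : List Bool) (hw : IsDyck m n w) :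
    ((Hpairs (m+n) n (star w)).card : ℤ)
      = ((Hpairs m n w).card : ℤ)
      + (∑ j ∈ Finset.range w.length, ∑ i ∈ Finset.range w.length,
          if w[j]? = some true ∧ w[i]? = some false ∧ i < j ∧
              lev m n w (j+1) - 2*n ≤ lev m n w i ∧ lev m n w i ≤ lev m n w (j+1) - n - 1
            then (1:ℤ) else 0)
      + (∑ j ∈ Finset.range w.length, ∑ i ∈ Finset.range w.length,
          if w[j]? = some true ∧ w[i]? = some true ∧ j < i ∧
              lev m n w (j+1) - m - n ≤ lev m n w (i+1) ∧ lev m n w (i+1) ≤ lev m n w (j+1) + n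
            then (1:ℤ) else 0) := by
  set L := w.length with hLdef
  set W := star w with hWdef
  rw [Hcard (m+n) n (by omega) hn W, Hcard m n hm hn w]
  -- outer reindexing
  rw [sum_star w (fun t2 => ∑ t1 ∈ Finset.range W.length,
      (if (t1 < t2 ∧ W[t1]? = some false ∧ W[t2]? = some true) ∧
          (lev (m+n) n W t1 ≤ lev (m+n) n W t2 ∧
            lev (m+n) n W t2 ≤ lev (m+n) n W t1 + (↑(m+n)) + n)
        then (1:ℤ) else 0))]
  have hins0 : (∑ j ∈ Finset.range L,
      if w[j]? = some true then
        (∑ t1 ∈ Finset.range W.length,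
          (if (t1 < starIdx w j + 1 ∧ W[t1]? = some false ∧
              W[starIdx w j + 1]? = some true) ∧
              (lev (m+n) n W t1 ≤ lev (m+n) n W (starIdx w j + 1) ∧
                lev (m+n) n W (starIdx w j + 1) ≤ lev (m+n) n W t1 + (↑(m+n)) + n)
            then (1:ℤ) else 0)) else 0) = 0 := by
    apply Finset.sum_eq_zero
    intro j _
    by_cases hj : w[j]? = some true
    · rw [if_pos hj]
      apply Finset.sum_eq_zero
      intro t1 _
      rw [if_neg]
      rintro ⟨⟨_, _, hbad⟩, _⟩
      rw [get?_star_ins w hj] at hbad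
      exact Bool.noConfusion (Option.some.inj hbad)
    · rw [if_neg hj]
  rw [hins0, add_zero]
  -- inner reindexing for each j
  have hmain : ∀ j ∈ Finset.range L,
      (∑ t1 ∈ Finset.range W.length,
        (if (t1 < starIdx w j ∧ W[t1]? = some false ∧ W[starIdx w j]? = some true) ∧
            (lev (m+n) n W t1 ≤ lev (m+n) n W (starIdx w j) ∧
              lev (m+n) n W (starIdx w j) ≤ lev (m+n) n W t1 + (↑(m+n)) + n)
          then (1:ℤ) else 0))
      = (∑ i ∈ Finset.range L,
          (if (i < j ∧ w[i]? = some false ∧ w[j]? = some true) ∧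
              (lev m n w i ≤ lev m n w j ∧ lev m n w j ≤ lev m n w i + m + n)
            then (1:ℤ) else 0))
        + (∑ i ∈ Finset.range L,
          (if w[j]? = some true ∧ w[i]? = some false ∧ i < j ∧
              lev m n w (j+1) - 2*n ≤ lev m n w i ∧ lev m n w i ≤ lev m n w (j+1) - n - 1
            then (1:ℤ) else 0))
        + (∑ i ∈ Finset.range L,
          (if w[i]? = some true ∧ w[j]? = some true ∧ i < j ∧
              lev m n w (i+1) - m - n ≤ lev m n w (j+1) ∧ lev m n w (j+1) ≤ lev m n w (i+1) + n
            then (1:ℤ) else 0)) := by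
    intro j hj
    rw [Finset.mem_range] at hj
    rw [sum_star w (fun t1 =>
      (if (t1 < starIdx w j ∧ W[t1]? = some false ∧ W[starIdx w j]? = some true) ∧
          (lev (m+n) n W t1 ≤ lev (m+n) n W (starIdx w j) ∧
            lev (m+n) n W (starIdx w j) ≤ lev (m+n) n W t1 + (↑(m+n)) + n)
        then (1:ℤ) else 0))]
    congr 1
    · -- old-old terms: split window
      rw [← Finset.sum_add_distrib]
      apply Finset.sum_congr rfl
      intro i hi
      rw [Finset.mem_range] at hi
      rw [get?_star w hi, get?_star w hj, lev_star m n w (le_of_lt hi),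
        lev_star m n w (le_of_lt hj)]
      have hlt : (starIdx w i < starIdx w j) = (i < j) := by
        rw [starIdx_lt_iff]
      simp only [hlt]
      by_cases hio : i < j
      · by_cases hpi : w[i]? = some false
        · by_cases hqj : w[j]? = some true
          · have hstep : lev m n w (j+1) = lev m n w j - m := lev_succ_true hqj
            simp only [hio, hpi, hqj]
            simp only [eq_self_iff_true, true_and]
            push_cast
            split_ifs <;> omega
          · rw [if_neg (by tauto), if_neg (by tauto), if_neg (by tauto)]; ring
        · rw [if_neg (by tauto), if_neg (by tauto), if_neg (by tauto)]; ring
      · rw [if_neg (by tauto), if_neg (by tauto), if_neg (by tauto)]; ring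
    · -- inserted terms
      apply Finset.sum_congr rfl
      intro i hi
      rw [Finset.mem_range] at hi
      by_cases hqi : w[i]? = some true
      · rw [if_pos hqi]
        rw [get?_star_ins w hqi, get?_star w hj, lev_star_ins m n w hqi,
          lev_star m n w (le_of_lt hj)]
        have hlt : (starIdx w i + 1 < starIdx w j) = (i < j) := by
          rw [starIdx_ins_lt_iff w hqi]
        simp only [hlt]
        by_cases hio : i < j
        · by_cases hqj : w[j]? = some true
          · have hstep : lev m n w (j+1) = lev m n w j - m := lev_succ_true hqj
            simp only [hio, hqi, hqj]
            simp only [eq_self_iff_true, true_and]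
            push_cast
            split_ifs <;> omega
          · rw [if_neg (by tauto), if_neg (by tauto)]
        · rw [if_neg (by tauto), if_neg (by tauto)]
      · rw [if_neg hqi, if_neg (by tauto)]
  rw [Finset.sum_congr rfl hmain]
  rw [Finset.sum_add_distrib, Finset.sum_add_distrib]
  congr 1
  rw [Finset.sum_comm]

end ChunkK
section ChunkL

lemma diagDist_star (m n : ℕ) (w : List Bool) {j : ℕ} (hq : w[j]? = some true) :
    diagDist (m+n) n (star w) (starIdx w j) = (n : ℤ) - lev m n w (j+1) := by
  unfold diagDist
  rw [ptX_star_ins w hq, ptY_star_ins w hq]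
  have h1 : lev m n w (j+1) = lev m n w j - m := lev_succ_true hq
  rw [h1]
  unfold lev
  push_cast
  ring

lemma Vsum (m n : ℕ) (hm : 0 < m) (hn : 0 < n) (hco : Nat.Coprime m n)
    (w : List Bool) (hw : IsDyck m n w) :
    (∑ p ∈ Vset (m+n) n (star w), (kH (m+n) n (star w) p : ℤ))
      = (∑ j ∈ Finset.range w.length, ∑ i ∈ Finset.range w.length,
          if w[j]? = some true ∧ Rpred m n w j ∧ w[i]? = some false ∧
              lev m n w (j+1) - 2*n ≤ lev m n w i ∧ lev m n w i ≤ lev m n w (j+1) - n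
            then (1:ℤ) else 0)
      + (∑ j ∈ Finset.range w.length, ∑ i ∈ Finset.range w.length,
          if w[j]? = some true ∧ Rpred m n w j ∧ w[i]? = some true ∧ i ≠ j ∧
              lev m n w (j+1) - n ≤ lev m n w (i+1) ∧ lev m n w (i+1) ≤ lev m n w (j+1)
            then (1:ℤ) else 0) := by
  set L := w.length with hLdef
  set W := star w with hWdef
  have hVW : Vset (m+n) n W = Finset.filter
      (fun t => (W[t]? = some true ∧ W[t+1]? = some false) ∧
        ∃ j' ∈ outerIdx W, diagDist (m+n) n W t < diagDist (m+n) n W j')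
      (Finset.range W.length) := by
    rw [Vset, outerIdx, Finset.filter_filter]
  rw [hVW, Finset.sum_filter]
  rw [sum_star w (fun t =>
    if (W[t]? = some true ∧ W[t+1]? = some false) ∧
        ∃ j' ∈ outerIdx W, diagDist (m+n) n W t < diagDist (m+n) n W j'
      then ((kH (m+n) n W t : ℤ)) else 0)]
  have hins0 : (∑ j ∈ Finset.range L,
      if w[j]? = some true then
        (if (W[starIdx w j + 1]? = some true ∧ W[starIdx w j + 1 + 1]? = some false) ∧
            ∃ j' ∈ outerIdx W, diagDist (m+n) n W (starIdx w j + 1) < diagDist (m+n) n W j'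
          then ((kH (m+n) n W (starIdx w j + 1) : ℤ)) else 0) else 0) = 0 := by
    apply Finset.sum_eq_zero
    intro j _
    by_cases hq : w[j]? = some true
    · rw [if_pos hq, if_neg]
      rintro ⟨⟨hbad, _⟩, _⟩
      rw [get?_star_ins w hq] at hbad
      exact Bool.noConfusion (Option.some.inj hbad)
    · rw [if_neg hq]
  rw [hins0, add_zero]
  -- main: per j < L
  have hmain : ∀ j ∈ Finset.range L,
      (if (W[starIdx w j]? = some true ∧ W[starIdx w j + 1]? = some false) ∧
          ∃ j' ∈ outerIdx W, diagDist (m+n) n W (starIdx w j) < diagDist (m+n) n W j'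
        then ((kH (m+n) n W (starIdx w j) : ℤ)) else 0)
      = (∑ i ∈ Finset.range L,
          if w[j]? = some true ∧ Rpred m n w j ∧ w[i]? = some false ∧
              lev m n w (j+1) - 2*n ≤ lev m n w i ∧ lev m n w i ≤ lev m n w (j+1) - n
            then (1:ℤ) else 0)
        + (∑ i ∈ Finset.range L,
          if w[j]? = some true ∧ Rpred m n w j ∧ w[i]? = some true ∧ i ≠ j ∧
              lev m n w (j+1) - n ≤ lev m n w (i+1) ∧ lev m n w (i+1) ≤ lev m n w (j+1)
            then (1:ℤ) else 0) := by
    intro j hjmem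
    have hj : j < L := Finset.mem_range.1 hjmem
    by_cases hq : w[j]? = some true
    · -- condition ↔ Rpred
      have hcond : ((W[starIdx w j]? = some true ∧ W[starIdx w j + 1]? = some false) ∧
          ∃ j' ∈ outerIdx W, diagDist (m+n) n W (starIdx w j) < diagDist (m+n) n W j')
          ↔ Rpred m n w j := by
        constructor
        · rintro ⟨_, t', ht'mem, hlt⟩
          rw [outerIdx, Finset.mem_filter, Finset.mem_range] at ht'mem
          obtain ⟨ht'len, ht'q, _⟩ := ht'mem
          rcases classify w t' ht'len with ⟨i', hi', rfl⟩ | ⟨j'', hj'', hq'', rfl⟩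
          · have hqi' : w[i']? = some true := by
              rw [← get?_star w hi']; exact ht'q
            refine ⟨i', hi', hqi', ?_⟩
            rw [diagDist_star m n w hq, diagDist_star m n w hqi'] at hlt
            omega
          · exfalso
            rw [get?_star_ins w hq''] at ht'q
            exact Bool.noConfusion (Option.some.inj ht'q)
        · rintro ⟨i', hi', hqi', hlt⟩
          refine ⟨⟨by rw [get?_star w hj]; exact hq, get?_star_ins w hq⟩,
            starIdx w i', ?_, ?_⟩
          · rw [outerIdx, Finset.mem_filter, Finset.mem_range]
            exact ⟨starIdx_lt_length w hi', by rw [get?_star w hi']; exact hqi',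
              get?_star_ins w hqi'⟩
          · rw [diagDist_star m n w hq, diagDist_star m n w hqi']
            omega
      by_cases hr : Rpred m n w j
      · rw [if_pos (hcond.2 hr)]
        -- expand kH
        have hkH : ((kH (m+n) n W (starIdx w j) : ℤ))
            = ∑ t1 ∈ Finset.range W.length,
              (if t1 ≠ starIdx w j + 1 ∧
                  lineHitsH (m+n) n W (ptX W (starIdx w j + 1)) (ptY W (starIdx w j + 1)) t1
                then (1:ℤ) else 0) := by
          unfold kH
          rw [Finset.sum_boole]
        rw [hkH]
        rw [sum_star w (fun t1 =>
          (if t1 ≠ starIdx w j + 1 ∧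
              lineHitsH (m+n) n W (ptX W (starIdx w j + 1)) (ptY W (starIdx w j + 1)) t1
            then (1:ℤ) else 0))]
        have hC : (n:ℤ) * ptX W (starIdx w j + 1) - ((m+n : ℕ):ℤ) * ptY W (starIdx w j + 1)
            = lev m n w (j+1) - n := by
          have := lev_star_ins m n w hq
          unfold lev at this
          exact this
        congr 1
        · -- old horizontal steps
          apply Finset.sum_congr rfl
          intro i hi
          rw [Finset.mem_range] at hi
          apply if_congr _ rfl rfl
          rw [lineHitsH_iff (by omega : 0 < n) W _ _ _]
          constructor
          · rintro ⟨_, hgf, h1, h2⟩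
            rw [get?_star w hi] at hgf
            rw [lev_star m n w (le_of_lt hi)] at h1 h2
            rw [hC] at h1 h2
            refine ⟨hq, hr, hgf, by omega, by omega⟩
          · rintro ⟨_, _, hgf, h1, h2⟩
            refine ⟨starIdx_ne_ins w hq, ?_⟩
            rw [get?_star w hi, lev_star m n w (le_of_lt hi), hC]
            exact ⟨hgf, by omega, by omega⟩
        · -- inserted horizontal steps
          apply Finset.sum_congr rfl
          intro i hi
          rw [Finset.mem_range] at hi
          by_cases hqi : w[i]? = some true
          · rw [if_pos hqi]
            apply if_congr _ rfl rfl
            rw [lineHitsH_iff (by omega : 0 < n) W _ _ _]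
            constructor
            · rintro ⟨hne, _, h1, h2⟩
              rw [lev_star_ins m n w hqi, hC] at h1 h2
              refine ⟨hq, hr, hqi, fun he => hne (by rw [he]), by omega, by omega⟩
            · rintro ⟨_, _, _, hne, h1, h2⟩
              refine ⟨fun he => hne (starIdx_inj w (by omega)), ?_⟩
              rw [get?_star_ins w hqi, lev_star_ins m n w hqi, hC]
              exact ⟨rfl, by omega, by omega⟩
          · rw [if_neg hqi, if_neg (by tauto)]
      · rw [if_neg (fun hc => hr (hcond.1 hc))]
        symm
        have z1 := Finset.sum_eq_zero (s := Finset.range L)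
          (f := fun i => if w[j]? = some true ∧ Rpred m n w j ∧ w[i]? = some false ∧
              lev m n w (j+1) - 2*n ≤ lev m n w i ∧ lev m n w i ≤ lev m n w (j+1) - n
            then (1:ℤ) else 0) (fun i _ => if_neg (by tauto))
        have z2 := Finset.sum_eq_zero (s := Finset.range L)
          (f := fun i => if w[j]? = some true ∧ Rpred m n w j ∧ w[i]? = some true ∧ i ≠ j ∧
              lev m n w (j+1) - n ≤ lev m n w (i+1) ∧ lev m n w (i+1) ≤ lev m n w (j+1)
            then (1:ℤ) else 0) (fun i _ => if_neg (by tauto))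
        rw [z1, z2]
        ring
    · rw [if_neg (by
        rintro ⟨⟨hbad, _⟩, _⟩
        rw [get?_star w hj] at hbad
        exact hq hbad)]
      symm
      have z1 := Finset.sum_eq_zero (s := Finset.range L)
        (f := fun i => if w[j]? = some true ∧ Rpred m n w j ∧ w[i]? = some false ∧
            lev m n w (j+1) - 2*n ≤ lev m n w i ∧ lev m n w i ≤ lev m n w (j+1) - n
          then (1:ℤ) else 0) (fun i _ => if_neg (by tauto))
      have z2 := Finset.sum_eq_zero (s := Finset.range L)
        (f := fun i => if w[j]? = some true ∧ Rpred m n w j ∧ w[i]? = some true ∧ i ≠ j ∧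
            lev m n w (j+1) - n ≤ lev m n w (i+1) ∧ lev m n w (i+1) ≤ lev m n w (j+1)
          then (1:ℤ) else 0) (fun i _ => if_neg (by tauto))
      rw [z1, z2]
      ring
  rw [Finset.sum_congr rfl hmain, Finset.sum_add_distrib]

end ChunkL

/-- `h(γ) = h(γ*) - Σ_{p ∈ V(γ*)} k(p)`. -/
theorem statement12 (m n : ℕ) (hm : 0 < m) (hn : 0 < n) (h : Nat.Coprime m n)
    (w : List Bool) (hw : IsDyck m n w) :
    ((Hpairs m n w).card : ℤ) =
      ((Hpairs (m + n) n (star w)).card : ℤ) -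
        ∑ p ∈ Vset (m + n) n (star w), (kH (m + n) n (star w) p : ℤ) := by
  have h1 := Hstar_decomp m n hm hn h w hw
  have h2 := Vsum m n hm hn h w hw
  have h3 := core hm hn h hw
  rw [h1, h2]
  linarith [h3]
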